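/- arXiv:2311.07435 — 4 statements merged into one kernel-verified Lean document; each statement's English description precedes it below -/
import Mathlib

section
/- Let a > 0, t₁ < t₂, and let x : ℝ → ℝ be continuously differentiable on [t₁, t₂] with derivative ẋ that is Lipschitz with constant a on [t₁, t₂]. Set v₂ := ẋ(t₂) and P := x(t₂), and suppose x(t₁) ≤ P − v₂(t₂ − t₁) − (a/2)(t₂ − t₁)². Then x(s) = P − v₂(t₂ − s) − (a/2)(t₂ − s)² for all s ∈ [t₁, t₂]; that is, x decelerates maximally at rate a throughout [t₁, t₂]. -/
/-- Maximal-deceleration rigidity: among trajectories with acceleration bounded in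
magnitude by `a` (derivative Lipschitz with constant `a`) attaining position `P` and
speed `v₂` at time `t₂`, any trajectory starting at time `t₁` at or below the maximal
deceleration curve must coincide with it on the whole interval `[t₁, t₂]`. -/
theorem maximal_deceleration_rigidity
    (a t₁ t₂ : ℝ) (ha : 0 < a) (ht : t₁ < t₂) (x : ℝ → ℝ)
    (hC1 : ContDiffOn ℝ 1 x (Set.Icc t₁ t₂))
    (hLip : LipschitzOnWith (Real.toNNReal a) (deriv x) (Set.Icc t₁ t₂))
    (hstart : x t₁ ≤ x t₂ - deriv x t₂ * (t₂ - t₁) - a / 2 * (t₂ - t₁) ^ 2) :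
    ∀ s ∈ Set.Icc t₁ t₂,
      x s = x t₂ - deriv x t₂ * (t₂ - s) - a / 2 * (t₂ - s) ^ 2 := by
  set v₂ := deriv x t₂ with hv
  set h : ℝ → ℝ := fun s => x s - (x t₂ - v₂ * (t₂ - s) - a / 2 * (t₂ - s) ^ 2) with hh
  have ht₁mem : t₁ ∈ Set.Icc t₁ t₂ := ⟨le_refl _, ht.le⟩
  have ht₂mem : t₂ ∈ Set.Icc t₁ t₂ := ⟨ht.le, le_refl _⟩
  -- derivative of the curve part
  have hgderiv : ∀ s : ℝ, HasDerivAt (fun s => x t₂ - v₂ * (t₂ - s) - a / 2 * (t₂ - s) ^ 2)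
      (v₂ + a * (t₂ - s)) s := by
    intro s
    have h1 : HasDerivAt (fun s : ℝ => t₂ - s) (-1) s := (hasDerivAt_id s).const_sub t₂
    have h2 : HasDerivAt (fun s : ℝ => v₂ * (t₂ - s)) (v₂ * -1) s := h1.const_mul v₂
    have h3 : HasDerivAt (fun s : ℝ => (t₂ - s) ^ 2) (2 * (t₂ - s) ^ 1 * -1) s := h1.pow 2
    have h4 : HasDerivAt (fun s : ℝ => a / 2 * (t₂ - s) ^ 2)
        (a / 2 * (2 * (t₂ - s) ^ 1 * -1)) s := h3.const_mul (a / 2)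
    have : HasDerivAt (fun s => x t₂ - v₂ * (t₂ - s) - a / 2 * (t₂ - s) ^ 2)
        (-(v₂ * -1) - a / 2 * (2 * (t₂ - s) ^ 1 * -1)) s := (h2.const_sub (x t₂)).sub h4
    convert this using 1
    ring
  -- differentiability of x at interior points
  have hxdiff : ∀ s ∈ Set.Ioo t₁ t₂, HasDerivAt x (deriv x s) s := by
    intro s hs
    have hmem : Set.Icc t₁ t₂ ∈ nhds s := Icc_mem_nhds hs.1 hs.2
    exact ((hC1.differentiableOn one_ne_zero s (Set.Ioo_subset_Icc_self hs)).differentiableAt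
      hmem).hasDerivAt
  have hhderiv : ∀ s ∈ Set.Ioo t₁ t₂,
      HasDerivAt h (deriv x s - (v₂ + a * (t₂ - s))) s := by
    intro s hs
    exact (hxdiff s hs).sub (hgderiv s)
  -- h is antitone on [t₁, t₂]
  have hanti : AntitoneOn h (Set.Icc t₁ t₂) := by
    apply antitoneOn_of_deriv_nonpos (convex_Icc t₁ t₂)
    · apply ContinuousOn.sub hC1.continuousOn
      fun_prop
    · intro s hs
      rw [interior_Icc] at hs
      exact ((hhderiv s hs).differentiableAt).differentiableWithinAt
    · intro s hs
      rw [interior_Icc] at hs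
      rw [(hhderiv s hs).deriv]
      have hsmem : s ∈ Set.Icc t₁ t₂ := Set.Ioo_subset_Icc_self hs
      have hd := hLip.dist_le_mul s hsmem t₂ ht₂mem
      rw [Real.dist_eq, Real.dist_eq, Real.coe_toNNReal a ha.le] at hd
      have h2 : deriv x s - v₂ ≤ a * (t₂ - s) := by
        have h3 : |deriv x s - v₂| ≤ a * (t₂ - s) := by
          calc |deriv x s - v₂| ≤ a * |s - t₂| := hd
          _ = a * (t₂ - s) := by rw [abs_sub_comm, abs_of_nonneg (by linarith [hs.2])]
        linarith [abs_le.mp h3]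
      linarith
  have hht₂ : h t₂ = 0 := by simp [hh]
  have hht₁ : h t₁ ≤ 0 := by simp only [hh]; linarith
  intro s hs
  have h1 : h s ≤ h t₁ := hanti ht₁mem hs hs.1
  have h2 : h t₂ ≤ h s := hanti hs ht₂mem hs.2
  have : h s = 0 := le_antisymm (h1.trans hht₁) (hht₂ ▸ h2)
  simp only [hh] at this
  linarith
end

section
/- Let x₀, v_max, a > 0 and t₀ < t_f1 ≤ t_f, with Δ := t_f − t₀ and S := t_f − t_f1. Assume Δ ≥ x₀/v_max + v_max/a and S ≤ x₀/v_max − v_max/a. Define t_stop := t₀ + x₀/v_max − S, t_dec := t_stop − v_max/a, t_acc := t_f1 − v_max/a, and the piecewise trajectory x* on [t₀, t_f] by: x*(s) = −x₀ + v_max(s − t₀) for s ∈ [t₀, t_dec]; x*(s) = −x₀ + v_max(s − t₀) − (a/2)(s − t_dec)² for s ∈ [t_dec, t_stop]; x*(s) = −v_max·S − v_max²/(2a) for s ∈ [t_stop, t_acc]; x*(s) = −v_max·S − v_max²/(2a) + (a/2)(s − t_acc)² for s ∈ [t_acc, t_f1]; x*(s) = −v_max·S + v_max(s − t_f1) for s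 ∈ [t_f1, t_f]. Then every x ∈ Π(t₀, t_f, x₀, v_max, a) satisfying x(t_f1) ≤ −v_max·S also satisfies x(s) ≤ x*(s) for all s ∈ [t₀, t_f]. -/
/-- The class `Π(t₀, t_f, x₀, v_max, a)` of compatible trajectories: continuously
differentiable on `[t₀, t_f]`, derivative Lipschitz with constant `a` (acceleration
bounded by `a`), speed in `[0, v_max]`, entering the control region of length `x₀` at
speed `v_max` and reaching the intersection (position `0`) at speed `v_max`. -/
def CompatTraj (t₀ tf x₀ vmax a : ℝ) : Set (ℝ → ℝ) :=
  {x | ContDiffOn ℝ 1 x (Set.Icc t₀ tf) ∧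
    LipschitzOnWith (Real.toNNReal a) (deriv x) (Set.Icc t₀ tf) ∧
    (∀ s ∈ Set.Icc t₀ tf, 0 ≤ deriv x s ∧ deriv x s ≤ vmax) ∧
    x t₀ = -x₀ ∧ deriv x t₀ = vmax ∧ x tf = 0 ∧ deriv x tf = vmax}

/-- The closed-form trajectory with a full stop: drive at `v_max`, decelerate at `−a`
to rest, rest, accelerate at `a` back to `v_max` at the platoon head's crossing time
`t_f1`, then drive at `v_max`. -/
noncomputable def xStarStop (x₀ vmax a t₀ tf1 tf : ℝ) (s : ℝ) : ℝ :=
  let S := tf - tf1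
  let tstop := t₀ + x₀ / vmax - S
  let tdec := tstop - vmax / a
  let tacc := tf1 - vmax / a
  if s ≤ tdec then -x₀ + vmax * (s - t₀)
  else if s ≤ tstop then -x₀ + vmax * (s - t₀) - a / 2 * (s - tdec) ^ 2
  else if s ≤ tacc then -vmax * S - vmax ^ 2 / (2 * a)
  else if s ≤ tf1 then -vmax * S - vmax ^ 2 / (2 * a) + a / 2 * (s - tacc) ^ 2
  else -vmax * S + vmax * (s - tf1)


open Set Topology Filter

/-- If `deriv f ≤ g'` on the interior, then `f b - f a ≤ g b - g a`. -/
private lemma mono_helper {f g g' : ℝ → ℝ} {a b : ℝ} (hab : a ≤ b)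
    (hfc : ContinuousOn f (Icc a b))
    (hfd : ∀ u ∈ Ioo a b, DifferentiableAt ℝ f u)
    (hg : ∀ u, HasDerivAt g (g' u) u)
    (hle : ∀ u ∈ Ioo a b, deriv f u ≤ g' u) :
    f b - f a ≤ g b - g a := by
  have hgd : ∀ u, DifferentiableAt ℝ g u := fun u => (hg u).differentiableAt
  have hgc : Continuous g := (Differentiable.continuous fun u => hgd u)
  have h : MonotoneOn (fun u => g u - f u) (Icc a b) := by
    apply monotoneOn_of_deriv_nonneg (convex_Icc a b) ((hgc.continuousOn).sub hfc)
    · rw [interior_Icc]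
      exact fun u hu => ((hgd u).sub (hfd u hu)).differentiableWithinAt
    · rw [interior_Icc]
      intro u hu
      rw [deriv_sub (hgd u) (hfd u hu), (hg u).deriv]
      exact sub_nonneg.2 (hle u hu)
  have := h (left_mem_Icc.2 hab) (right_mem_Icc.2 hab) hab
  dsimp at this
  linarith

/-- If `g' ≤ deriv f` on the interior, then `g b - g a ≤ f b - f a`. -/
private lemma mono_helper' {f g g' : ℝ → ℝ} {a b : ℝ} (hab : a ≤ b)
    (hfc : ContinuousOn f (Icc a b))
    (hfd : ∀ u ∈ Ioo a b, DifferentiableAt ℝ f u)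
    (hg : ∀ u, HasDerivAt g (g' u) u)
    (hle : ∀ u ∈ Ioo a b, g' u ≤ deriv f u) :
    g b - g a ≤ f b - f a := by
  have hgd : ∀ u, DifferentiableAt ℝ g u := fun u => (hg u).differentiableAt
  have hgc : Continuous g := (Differentiable.continuous fun u => hgd u)
  have h : MonotoneOn (fun u => f u - g u) (Icc a b) := by
    apply monotoneOn_of_deriv_nonneg (convex_Icc a b) (hfc.sub hgc.continuousOn)
    · rw [interior_Icc]
      exact fun u hu => ((hfd u hu).sub (hgd u)).differentiableWithinAt
    · rw [interior_Icc]
      intro u hu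
      rw [deriv_sub (hfd u hu) (hgd u), (hg u).deriv]
      exact sub_nonneg.2 (hle u hu)
  have := h (left_mem_Icc.2 hab) (right_mem_Icc.2 hab) hab
  dsimp at this
  linarith

theorem test : True := trivial

set_option maxHeartbeats 2000000 in
/-- Optimality part 1 (stopping case): the closed-form stopping trajectory pointwise
dominates every compatible trajectory satisfying the safety constraint
`x(t_f1) ≤ −v_max·S` at the crossing time of the head of the platoon. -/
theorem xStarStop_pointwise_optimal
    (x₀ vmax a t₀ tf1 tf : ℝ)
    (hx₀ : 0 < x₀) (hv : 0 < vmax) (ha : 0 < a)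
    (ht₀ : t₀ < tf1) (htf : tf1 ≤ tf)
    (hΔ : tf - t₀ ≥ x₀ / vmax + vmax / a)
    (hS : tf - tf1 ≤ x₀ / vmax - vmax / a) :
    ∀ x ∈ CompatTraj t₀ tf x₀ vmax a,
      x tf1 ≤ -vmax * (tf - tf1) →
      ∀ s ∈ Set.Icc t₀ tf, x s ≤ xStarStop x₀ vmax a t₀ tf1 tf s := by
  intro x hx hsafe s hs
  obtain ⟨hC, hL, hbd, hx0, hd0, hxtf, hdtf⟩ := hx
  simp only [xStarStop]
  set S := tf - tf1 with hS'
  set tstop := t₀ + x₀ / vmax - S with htstop'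
  set tdec := tstop - vmax / a with htdec'
  set tacc := tf1 - vmax / a with htacc'
  have hva : 0 < vmax / a := div_pos hv ha
  have hS0 : 0 ≤ S := by simp [hS']; linarith
  have h1 : t₀ ≤ tdec := by rw [htdec', htstop']; linarith
  have h2 : tdec < tstop := by rw [htdec']; linarith
  have h3 : tstop ≤ tacc := by
    rw [htacc', htstop', hS']
    linarith [hΔ]
  have h4 : tacc < tf1 := by rw [htacc']; linarith
  -- differentiability of x at interior points
  have hdiff : ∀ u ∈ Ioo t₀ tf, DifferentiableAt ℝ x u := by
    intro u hu
    exact ((hC.differentiableOn one_ne_zero) u (Ioo_subset_Icc_self hu)).differentiableAt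
      (Icc_mem_nhds hu.1 hu.2)
  -- speed upper bound, integrated
  have keyUB : ∀ p q, t₀ ≤ p → p ≤ q → q ≤ tf → x q - x p ≤ vmax * (q - p) := by
    intro p q hp hpq hq
    have hg : ∀ u : ℝ, HasDerivAt (fun v => vmax * v) vmax u := by
      intro u
      simpa using (hasDerivAt_id u).const_mul vmax
    have := mono_helper (f := x) (g := fun v => vmax * v) (g' := fun _ => vmax) hpq
      (hC.continuousOn.mono (Icc_subset_Icc hp hq))
      (fun u hu => hdiff u ⟨lt_of_le_of_lt hp hu.1, lt_of_lt_of_le hu.2 hq⟩)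
      hg
      (fun u hu => (hbd u ⟨hp.trans hu.1.le, hu.2.le.trans hq⟩).2)
    linarith
  -- monotonicity of x
  have hmono : ∀ p q, t₀ ≤ p → p ≤ q → q ≤ tf → x p ≤ x q := by
    intro p q hp hpq hq
    have hg : ∀ u : ℝ, HasDerivAt (fun _ : ℝ => (0 : ℝ)) 0 u := fun u => hasDerivAt_const u 0
    have := mono_helper' (f := x) (g := fun _ => (0:ℝ)) (g' := fun _ => 0) hpq
      (hC.continuousOn.mono (Icc_subset_Icc hp hq))
      (fun u hu => hdiff u ⟨lt_of_le_of_lt hp hu.1, lt_of_lt_of_le hu.2 hq⟩)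
      hg
      (fun u hu => (hbd u ⟨hp.trans hu.1.le, hu.2.le.trans hq⟩).1)
    linarith
  -- the line bound
  have hline : ∀ u, t₀ ≤ u → u ≤ tf → x u ≤ -x₀ + vmax * (u - t₀) := by
    intro u hu1 hu2
    have := keyUB t₀ u le_rfl hu1 hu2
    rw [hx0] at this
    linarith
  -- exact value at tf1 and on [tf1, tf]
  have e1 : x tf1 = -vmax * S := by
    have := keyUB tf1 tf ht₀.le htf le_rfl
    rw [hxtf] at this
    have h5 : -vmax * S ≤ x tf1 := by rw [hS']; nlinarith [this]
    linarith [hsafe]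
  have e2 : ∀ u ∈ Icc tf1 tf, x u = -vmax * S + vmax * (u - tf1) := by
    intro u hu
    have k1 := keyUB tf1 u ht₀.le hu.1 hu.2
    have k2 := keyUB u tf (ht₀.le.trans hu.1) hu.2 le_rfl
    rw [hxtf] at k2
    rw [e1] at k1
    have : vmax * (u - tf1) + vmax * (tf - u) = vmax * S := by rw [hS']; ring
    linarith
  -- derivative at tf1 equals vmax
  have hdtf1 : deriv x tf1 = vmax := by
    rcases eq_or_lt_of_le htf with h | h
    · rw [h]; exact hdtf
    · have hc : ContinuousWithinAt (deriv x) (Icc t₀ tf) tf1 :=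
        (hL.continuousOn) tf1 ⟨ht₀.le, htf⟩
      have hc2 : ContinuousWithinAt (deriv x) (Ioo tf1 tf) tf1 :=
        hc.mono (fun u hu => ⟨(ht₀.trans hu.1).le, hu.2.le⟩)
      have hne : (𝓝[Ioo tf1 tf] tf1).NeBot := by
        rw [← mem_closure_iff_nhdsWithin_neBot, closure_Ioo h.ne]
        exact ⟨le_rfl, htf⟩
      have heq : ∀ u ∈ Ioo tf1 tf, deriv x u = vmax := by
        intro u hu
        have hmem : Icc tf1 tf ∈ nhds u := Icc_mem_nhds hu.1 hu.2
        have hev : x =ᶠ[nhds u] fun v => -vmax * S + vmax * (v - tf1) :=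
          Filter.eventuallyEq_of_mem hmem (fun v hv => e2 v hv)
        rw [hev.deriv_eq]
        have hd : HasDerivAt (fun v => -vmax * S + vmax * (v - tf1)) vmax u := by
          simpa using (((hasDerivAt_id u).sub_const tf1).const_mul vmax).const_add (-vmax * S)
        exact hd.deriv
      have t1 : Filter.Tendsto (deriv x) (𝓝[Ioo tf1 tf] tf1) (nhds (deriv x tf1)) := hc2
      have t2 : Filter.Tendsto (deriv x) (𝓝[Ioo tf1 tf] tf1) (nhds vmax) := by
        apply Filter.Tendsto.congr' _ tendsto_const_nhds
        filter_upwards [self_mem_nhdsWithin] with u hu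
        exact (heq u hu).symm
      exact tendsto_nhds_unique t1 t2
  -- backward velocity bound
  have hvel : ∀ u ∈ Icc t₀ tf1, vmax - a * (tf1 - u) ≤ deriv x u := by
    intro u hu
    have hd := hL.dist_le_mul tf1 ⟨ht₀.le, htf⟩ u ⟨hu.1, hu.2.trans htf⟩
    rw [Real.dist_eq, Real.dist_eq, hdtf1, Real.coe_toNNReal a ha.le] at hd
    have h5 : |tf1 - u| = tf1 - u := abs_of_nonneg (by linarith [hu.2])
    rw [h5] at hd
    have := (le_abs_self (vmax - deriv x u)).trans hd
    linarith
  -- backward position bound from tf1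
  have B1 : ∀ u, t₀ ≤ u → u ≤ tf1 →
      x u ≤ -vmax * S - vmax * (tf1 - u) + a / 2 * (tf1 - u) ^ 2 := by
    intro u hu1 hu2
    have hg : ∀ v : ℝ, HasDerivAt (fun w => vmax * w + a / 2 * (tf1 - w) ^ 2)
        (vmax - a * (tf1 - v)) v := by
      intro v
      have h1 : HasDerivAt (fun w : ℝ => (tf1 - w) ^ 2) (2 * (tf1 - v) ^ 1 * (-1)) v :=
        ((hasDerivAt_id v).const_sub tf1).pow 2
      have h2 := ((hasDerivAt_id v).const_mul vmax).add (h1.const_mul (a / 2))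
      refine h2.congr_deriv ?_
      ring
    have hkey := mono_helper' (f := x)
      (g := fun w => vmax * w + a / 2 * (tf1 - w) ^ 2)
      (g' := fun v => vmax - a * (tf1 - v)) hu2
      (hC.continuousOn.mono (Icc_subset_Icc hu1 htf))
      (fun v hv => hdiff v ⟨lt_of_le_of_lt hu1 hv.1, lt_of_lt_of_le hv.2 htf⟩)
      hg
      (fun v hv => hvel v ⟨hu1.trans hv.1.le, hv.2.le⟩)
    rw [e1] at hkey
    nlinarith [hkey]
  -- flat bound up to tacc
  have hacc_val : -vmax * S - vmax * (tf1 - tacc) + a / 2 * (tf1 - tacc) ^ 2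
      = -vmax * S - vmax ^ 2 / (2 * a) := by
    rw [htacc']
    field_simp
    ring
  have F2 : ∀ u, t₀ ≤ u → u ≤ tacc → x u ≤ -vmax * S - vmax ^ 2 / (2 * a) := by
    intro u hu1 hu2
    have hm := hmono u tacc hu1 hu2 (h4.le.trans htf)
    have hb := B1 tacc (hu1.trans hu2) h4.le
    rw [hacc_val] at hb
    linarith
  -- deceleration parabola derivative
  have hp : ∀ u : ℝ, HasDerivAt (fun w => -x₀ + vmax * (w - t₀) - a / 2 * (w - tdec) ^ 2)
      (vmax - a * (u - tdec)) u := by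
    intro u
    have hq : HasDerivAt (fun w : ℝ => (w - tdec) ^ 2) (2 * (u - tdec) ^ 1 * 1) u :=
      ((hasDerivAt_id u).sub_const tdec).pow 2
    have h2 := ((((hasDerivAt_id u).sub_const t₀).const_mul vmax).const_add (-x₀)).sub
      (hq.const_mul (a / 2))
    refine h2.congr_deriv ?_
    ring
  have hpc : Continuous fun w => -x₀ + vmax * (w - t₀) - a / 2 * (w - tdec) ^ 2 :=
    Differentiable.continuous fun w => (hp w).differentiableAt
  have hstf : tstop < tf := lt_of_le_of_lt h3 (lt_of_lt_of_le h4 htf)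
  -- the deceleration bound
  have Fdec : ∀ u, tdec ≤ u → u ≤ tstop →
      x u ≤ -x₀ + vmax * (u - t₀) - a / 2 * (u - tdec) ^ 2 := by
    intro u hu1 hu2
    by_contra hcon
    push_neg at hcon
    have hA : x tdec ≤ -x₀ + vmax * (tdec - t₀) - a / 2 * (tdec - tdec) ^ 2 := by
      have := hline tdec h1 (by linarith)
      simpa using this
    have hstop_val : -x₀ + vmax * (tstop - t₀) - a / 2 * (tstop - tdec) ^ 2
        = -vmax * S - vmax ^ 2 / (2 * a) := by
      rw [htdec', htstop']
      field_simp
      ring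
    have hB : x tstop ≤ -x₀ + vmax * (tstop - t₀) - a / 2 * (tstop - tdec) ^ 2 := by
      rw [hstop_val]
      exact F2 tstop (by linarith) h3
    have hu1' : tdec < u := by
      rcases eq_or_lt_of_le hu1 with h | h
      · exfalso; rw [← h] at hcon; linarith
      · exact h
    have hu2' : u < tstop := by
      rcases eq_or_lt_of_le hu2 with h | h
      · exfalso; rw [h] at hcon; linarith
      · exact h
    set g := fun w => x w - (-x₀ + vmax * (w - t₀) - a / 2 * (w - tdec) ^ 2) with hg'
    have hgc : ContinuousOn g (Icc t₀ tf) := hC.continuousOn.sub hpc.continuousOn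
    have hgderiv : ∀ ξ, t₀ < ξ → ξ < tf →
        deriv g ξ = deriv x ξ - (vmax - a * (ξ - tdec)) := by
      intro ξ hξ1 hξ2
      rw [hg', deriv_fun_sub (hdiff ξ ⟨hξ1, hξ2⟩) (hp ξ).differentiableAt, (hp ξ).deriv]
    have hgu : 0 < g u := by rw [hg']; dsimp; linarith
    have hgdec : g tdec ≤ 0 := by rw [hg']; dsimp; linarith
    have hgstop : g tstop ≤ 0 := by rw [hg']; dsimp; linarith
    obtain ⟨ξ₁, hξ₁, hdξ₁⟩ := exists_deriv_eq_slope g hu1'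
      (hgc.mono (Icc_subset_Icc h1 (by linarith)))
      (fun w hw => ((hdiff w ⟨lt_of_le_of_lt h1 hw.1, by linarith [hw.2]⟩).sub
        (hp w).differentiableAt).differentiableWithinAt)
    obtain ⟨ξ₂, hξ₂, hdξ₂⟩ := exists_deriv_eq_slope g hu2'
      (hgc.mono (Icc_subset_Icc (by linarith) hstf.le))
      (fun w hw => ((hdiff w ⟨by linarith [hw.1], lt_trans hw.2 hstf⟩).sub
        (hp w).differentiableAt).differentiableWithinAt)
    have hξ₁t : t₀ < ξ₁ ∧ ξ₁ < tf := ⟨lt_of_le_of_lt h1 hξ₁.1, by linarith [hξ₁.2]⟩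
    have hξ₂t : t₀ < ξ₂ ∧ ξ₂ < tf := ⟨by linarith [hξ₂.1], lt_trans hξ₂.2 hstf⟩
    have e₁ : deriv x ξ₁ - (vmax - a * (ξ₁ - tdec)) = (g u - g tdec) / (u - tdec) := by
      rw [← hgderiv ξ₁ hξ₁t.1 hξ₁t.2]; exact hdξ₁
    have e₂ : deriv x ξ₂ - (vmax - a * (ξ₂ - tdec)) = (g tstop - g u) / (tstop - u) := by
      rw [← hgderiv ξ₂ hξ₂t.1 hξ₂t.2]; exact hdξ₂
    have p1 : 0 < (g u - g tdec) / (u - tdec) := div_pos (by linarith) (by linarith)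
    have p2 : (g tstop - g u) / (tstop - u) < 0 :=
      div_neg_of_neg_of_pos (by linarith) (by linarith)
    have hξ₁₂ : ξ₁ < ξ₂ := lt_trans hξ₁.2 hξ₂.1
    have hd := hL.dist_le_mul ξ₁ ⟨hξ₁t.1.le, hξ₁t.2.le⟩ ξ₂ ⟨hξ₂t.1.le, hξ₂t.2.le⟩
    rw [Real.dist_eq, Real.dist_eq, Real.coe_toNNReal a ha.le,
      abs_of_nonpos (by linarith : ξ₁ - ξ₂ ≤ 0)] at hd
    have hd2 := (le_abs_self (deriv x ξ₁ - deriv x ξ₂)).trans hd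
    linarith
  -- assemble the five pieces
  have hs1 := hs.1
  have hs2 := hs.2
  split_ifs with c1 c2 c3 c4
  · exact hline s hs1 hs2
  · push_neg at c1
    exact Fdec s c1.le c2
  · push_neg at c1 c2
    exact F2 s hs1 c3
  · push_neg at c1 c2 c3
    have hb := B1 s hs1 c4
    have heq : -vmax * S - vmax * (tf1 - s) + a / 2 * (tf1 - s) ^ 2
        = -vmax * S - vmax ^ 2 / (2 * a) + a / 2 * (s - tacc) ^ 2 := by
      rw [htacc']
      field_simp
      ring
    linarith
  · push_neg at c4
    rw [e2 s ⟨c4.le, hs2⟩]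
end

section
/- Let x₀, v_max, a > 0 and t₀ < t_f1 ≤ t_f, with Δ := t_f − t₀ and S := t_f − t_f1. Assume Δ ≥ x₀/v_max + v_max/a and 0 ≤ S ≤ x₀/v_max − v_max/a. Define t_stop := t₀ + x₀/v_max − S, t_dec := t_stop − v_max/a, t_acc := t_f1 − v_max/a, and x* on [t₀, t_f] by: x*(s) = −x₀ + v_max(s − t₀) for s ∈ [t₀, t_dec]; x*(s) = −x₀ + v_max(s − t₀) − (a/2)(s − t_dec)² for s ∈ [t_dec, t_stop]; x*(s) = −v_max·S − v_max²/(2a) for s ∈ [t_stop, t_acc]; x*(s) = −v_max·S − v_max²/(2a) + (a/2)(s − t_acc)² for s ∈ [t_acc, t_f1]; x*(s) = −v_max·S + v_max(s − t_f1) for s ∈ [t_f1, t_f]. Then x* belongs to Π(t₀, t_f, x₀, v_max, a) and satisfies x*(t_f1) = −v_max·S. -/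
open Filter in
lemma hasDerivAt_maxsq (t u : ℝ) :
    HasDerivAt (fun s : ℝ => (max (s - t) 0) ^ 2) (2 * max (u - t) 0) u := by
  rcases lt_trichotomy u t with h | h | h
  · rw [max_eq_right (by linarith : u - t ≤ (0:ℝ)), mul_zero]
    refine (hasDerivAt_const u (0:ℝ)).congr_of_eventuallyEq ?_
    filter_upwards [Iio_mem_nhds h] with s hs
    rw [max_eq_right (by simp at hs; linarith : s - t ≤ (0:ℝ))]
    norm_num
  · subst h
    rw [max_eq_right (by linarith : u - u ≤ (0:ℝ)), mul_zero]
    rw [hasDerivAt_iff_isLittleO]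
    rw [Asymptotics.isLittleO_iff]
    intro c hc
    filter_upwards [Metric.ball_mem_nhds u hc] with s hs
    rw [Metric.mem_ball, Real.dist_eq] at hs
    simp only [smul_zero, sub_self, sub_zero, max_self, ne_eq, OfNat.ofNat_ne_zero,
      not_false_eq_true, zero_pow, Real.norm_eq_abs]
    rcases le_total (s - u) 0 with h' | h'
    · rw [max_eq_right h']
      simp only [ne_eq, OfNat.ofNat_ne_zero, not_false_eq_true, zero_pow, abs_zero]
      positivity
    · rw [max_eq_left h', abs_pow]
      have : |s - u| ^ 2 ≤ c * |s - u| := by nlinarith [abs_nonneg (s - u)]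
      simpa using this
  · rw [max_eq_left (by linarith : (0:ℝ) ≤ u - t)]
    have hd : HasDerivAt (fun s : ℝ => (s - t) ^ 2) (2 * (u - t)) u := by
      have := ((hasDerivAt_id u).sub_const t).fun_pow 2
      simpa using this
    refine hd.congr_of_eventuallyEq ?_
    filter_upwards [Ioi_mem_nhds h] with s hs
    rw [max_eq_left (by simp at hs; linarith : (0:ℝ) ≤ s - t)]

set_option maxHeartbeats 2000000 in
/-- Feasibility of the stopping trajectory: under the boxed feasibility conditions of
the paper, the closed-form stopping trajectory is a compatible trajectory and is exactly
at distance `v_max·S` from the intersection at the crossing time `t_f1` of the platoon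
head. -/
theorem xStarStop_feasible
    (x₀ vmax a t₀ tf1 tf : ℝ)
    (hx₀ : 0 < x₀) (hv : 0 < vmax) (ha : 0 < a)
    (ht₀ : t₀ < tf1) (htf : tf1 ≤ tf)
    (hΔ : tf - t₀ ≥ x₀ / vmax + vmax / a)
    (hS₀ : 0 ≤ tf - tf1)
    (hS : tf - tf1 ≤ x₀ / vmax - vmax / a) :
    xStarStop x₀ vmax a t₀ tf1 tf ∈ CompatTraj t₀ tf x₀ vmax a ∧
    xStarStop x₀ vmax a t₀ tf1 tf tf1 = -vmax * (tf - tf1) := by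
  have hane : a ≠ 0 := ha.ne'
  have hvne : vmax ≠ 0 := hv.ne'
  have hb : 0 < vmax / a := div_pos hv ha
  set S : ℝ := tf - tf1 with hSdef
  set tstop : ℝ := t₀ + x₀ / vmax - S with hstop
  set tdec : ℝ := tstop - vmax / a with hdec
  set tacc : ℝ := tf1 - vmax / a with hacc
  clear_value S tstop tdec tacc
  have key : a * (vmax / a) = vmax := by field_simp
  have o1 : t₀ ≤ tdec := by rw [hdec, hstop]; linarith
  have o2 : tdec ≤ tstop := by rw [hdec]; linarith
  have o3 : tstop ≤ tacc := by rw [hacc, hstop]; linarith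
  have o4 : tacc < tf1 := by rw [hacc]; linarith
  -- the global closed form as a sum of squared positive parts
  set G : ℝ → ℝ := fun s => -x₀ + vmax * (s - t₀) - a / 2 * (max (s - tdec) 0) ^ 2
      + a / 2 * (max (s - tstop) 0) ^ 2 + a / 2 * (max (s - tacc) 0) ^ 2
      - a / 2 * (max (s - tf1) 0) ^ 2 with hG
  clear_value G
  have hxG : xStarStop x₀ vmax a t₀ tf1 tf = G := by
    funext s
    simp only [xStarStop]
    rw [← hSdef, ← hstop, ← hdec, ← hacc]
    simp only [hG]
    split_ifs with i1 i2 i3 i4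
    · rw [max_eq_right (by linarith : s - tdec ≤ (0:ℝ)),
        max_eq_right (by linarith : s - tstop ≤ (0:ℝ)),
        max_eq_right (by linarith : s - tacc ≤ (0:ℝ)),
        max_eq_right (by linarith : s - tf1 ≤ (0:ℝ))]
      ring
    · rw [max_eq_left (by linarith : (0:ℝ) ≤ s - tdec),
        max_eq_right (by linarith : s - tstop ≤ (0:ℝ)),
        max_eq_right (by linarith : s - tacc ≤ (0:ℝ)),
        max_eq_right (by linarith : s - tf1 ≤ (0:ℝ))]
      ring
    · rw [max_eq_left (by linarith : (0:ℝ) ≤ s - tdec),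
        max_eq_left (by linarith : (0:ℝ) ≤ s - tstop),
        max_eq_right (by linarith : s - tacc ≤ (0:ℝ)),
        max_eq_right (by linarith : s - tf1 ≤ (0:ℝ))]
      rw [hdec, hstop, hSdef]
      field_simp
      ring
    · rw [max_eq_left (by linarith : (0:ℝ) ≤ s - tdec),
        max_eq_left (by linarith : (0:ℝ) ≤ s - tstop),
        max_eq_left (by linarith : (0:ℝ) ≤ s - tacc),
        max_eq_right (by linarith : s - tf1 ≤ (0:ℝ))]
      rw [hdec, hstop, hacc, hSdef]
      field_simp
      ring
    · rw [max_eq_left (by linarith : (0:ℝ) ≤ s - tdec),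
        max_eq_left (by linarith : (0:ℝ) ≤ s - tstop),
        max_eq_left (by linarith : (0:ℝ) ≤ s - tacc),
        max_eq_left (by linarith : (0:ℝ) ≤ s - tf1)]
      rw [hdec, hstop, hacc, hSdef]
      field_simp
      ring
  -- the velocity profile
  set v : ℝ → ℝ := fun s => vmax - a * max (s - tdec) 0 + a * max (s - tstop) 0
      + a * max (s - tacc) 0 - a * max (s - tf1) 0 with hvdef
  clear_value v
  have hderivG : ∀ s, HasDerivAt G (v s) s := by
    intro s
    have m1 := (hasDerivAt_maxsq tdec s).const_mul (a / 2)
    have m2 := (hasDerivAt_maxsq tstop s).const_mul (a / 2)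
    have m3 := (hasDerivAt_maxsq tacc s).const_mul (a / 2)
    have m4 := (hasDerivAt_maxsq tf1 s).const_mul (a / 2)
    have lin : HasDerivAt (fun u : ℝ => -x₀ + vmax * (u - t₀)) (vmax * 1) s := by
      simpa using
        (hasDerivAt_const s (-x₀)).fun_add (((hasDerivAt_id s).sub_const t₀).const_mul vmax)
    have := (((lin.fun_sub m1).fun_add m2).fun_add m3).fun_sub m4
    rw [hG, hvdef]
    refine this.congr_deriv ?_
    ring
  have hdiffG : Differentiable ℝ G := fun s => (hderivG s).differentiableAt
  have hderiv : deriv G = v := funext fun s => (hderivG s).deriv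
  -- the velocity profile in clamped form
  set w : ℝ → ℝ := fun s => min vmax (max (vmax - a * (s - tdec)) 0 + max (a * (s - tacc)) 0)
    with hwdef
  clear_value w
  have hvw : ∀ s, v s = w s := by
    intro s
    simp only [hvdef, hwdef]
    rcases le_total s tdec with c1 | c1
    · have d1 : s - tdec ≤ (0:ℝ) := by linarith
      have d2 : s - tacc ≤ (0:ℝ) := by linarith
      have f1 : a * (s - tdec) ≤ 0 := mul_nonpos_of_nonneg_of_nonpos ha.le d1
      have f2 : a * (s - tacc) ≤ 0 := mul_nonpos_of_nonneg_of_nonpos ha.le d2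
      rw [max_eq_right d1,
        max_eq_right (by linarith : s - tstop ≤ (0:ℝ)),
        max_eq_right d2,
        max_eq_right (by linarith : s - tf1 ≤ (0:ℝ)),
        max_eq_left (by linarith : (0:ℝ) ≤ vmax - a * (s - tdec)),
        max_eq_right f2,
        min_eq_left (by linarith)]
      ring
    · rcases le_total s tstop with c2 | c2
      · have e1 : a * (s - tdec) ≤ vmax := by
          have := mul_le_mul_of_nonneg_left (by linarith [hdec] : s - tdec ≤ vmax / a) ha.le
          linarith [key]
        have e2 : 0 ≤ a * (s - tdec) := mul_nonneg ha.le (by linarith)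
        rw [max_eq_left (by linarith : (0:ℝ) ≤ s - tdec),
          max_eq_right (by linarith : s - tstop ≤ (0:ℝ)),
          max_eq_right (by linarith : s - tacc ≤ (0:ℝ)),
          max_eq_right (by linarith : s - tf1 ≤ (0:ℝ)),
          max_eq_left (by linarith : (0:ℝ) ≤ vmax - a * (s - tdec)),
          max_eq_right (mul_nonpos_of_nonneg_of_nonpos ha.le
            (by linarith : s - tacc ≤ (0:ℝ))),
          min_eq_right (by linarith)]
        ring
      · rcases le_total s tacc with c3 | c3
        · have e1 : vmax ≤ a * (s - tdec) := by
            have := mul_le_mul_of_nonneg_left (by linarith [hdec] : vmax / a ≤ s - tdec) ha.le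
            linarith [key]
          rw [max_eq_left (by linarith : (0:ℝ) ≤ s - tdec),
            max_eq_left (by linarith : (0:ℝ) ≤ s - tstop),
            max_eq_right (by linarith : s - tacc ≤ (0:ℝ)),
            max_eq_right (by linarith : s - tf1 ≤ (0:ℝ)),
            max_eq_right (by linarith : vmax - a * (s - tdec) ≤ (0:ℝ)),
            max_eq_right (mul_nonpos_of_nonneg_of_nonpos ha.le
              (by linarith : s - tacc ≤ (0:ℝ))),
            min_eq_right (by linarith : (0:ℝ) + 0 ≤ vmax)]
          linear_combination (-1 : ℝ) * key + a * hdec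
        · rcases le_total s tf1 with c4 | c4
          · have e1 : vmax ≤ a * (s - tdec) := by
              have := mul_le_mul_of_nonneg_left
                (by linarith [hdec] : vmax / a ≤ s - tdec) ha.le
              linarith [key]
            have e2 : a * (s - tacc) ≤ vmax := by
              have := mul_le_mul_of_nonneg_left
                (by linarith [hacc] : s - tacc ≤ vmax / a) ha.le
              linarith [key]
            rw [max_eq_left (by linarith : (0:ℝ) ≤ s - tdec),
              max_eq_left (by linarith : (0:ℝ) ≤ s - tstop),
              max_eq_left (by linarith : (0:ℝ) ≤ s - tacc),
              max_eq_right (by linarith : s - tf1 ≤ (0:ℝ)),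
              max_eq_right (by linarith : vmax - a * (s - tdec) ≤ (0:ℝ)),
              max_eq_left (mul_nonneg ha.le (by linarith : (0:ℝ) ≤ s - tacc)),
              min_eq_right (by linarith : (0:ℝ) + a * (s - tacc) ≤ vmax)]
            linear_combination (-1 : ℝ) * key + a * hdec
          · have e1 : vmax ≤ a * (s - tdec) := by
              have := mul_le_mul_of_nonneg_left
                (by linarith [hdec] : vmax / a ≤ s - tdec) ha.le
              linarith [key]
            have e2 : vmax ≤ a * (s - tacc) := by
              have := mul_le_mul_of_nonneg_left
                (by linarith [hacc] : vmax / a ≤ s - tacc) ha.le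
              linarith [key]
            rw [max_eq_left (by linarith : (0:ℝ) ≤ s - tdec),
              max_eq_left (by linarith : (0:ℝ) ≤ s - tstop),
              max_eq_left (by linarith : (0:ℝ) ≤ s - tacc),
              max_eq_left (by linarith : (0:ℝ) ≤ s - tf1),
              max_eq_right (by linarith : vmax - a * (s - tdec) ≤ (0:ℝ)),
              max_eq_left (mul_nonneg ha.le (by linarith : (0:ℝ) ≤ s - tacc)),
              min_eq_left (by linarith : vmax ≤ (0:ℝ) + a * (s - tacc))]
            linear_combination a * hdec - a * hacc
  -- Lipschitz bound for w
  have hwlip : LipschitzWith (Real.toNNReal a) w := by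
    apply LipschitzWith.of_dist_le_mul
    intro p q
    rw [Real.dist_eq, Real.dist_eq, Real.coe_toNNReal a ha.le]
    -- reduce to a bound on the inner sums, proving it for ordered pairs
    have main : ∀ p q : ℝ, p ≤ q →
        |(max (vmax - a * (p - tdec)) 0 + max (a * (p - tacc)) 0)
          - (max (vmax - a * (q - tdec)) 0 + max (a * (q - tacc)) 0)| ≤ a * (q - p) := by
      intro p q hpq
      have hg1 : max (vmax - a * (q - tdec)) 0 ≤ max (vmax - a * (p - tdec)) 0 := by
        apply max_le_max _ le_rfl
        nlinarith [mul_le_mul_of_nonneg_left (by linarith : p - tdec ≤ q - tdec) ha.le]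
      have hg2 : |max (vmax - a * (p - tdec)) 0 - max (vmax - a * (q - tdec)) 0| ≤
          a * (q - p) := by
        refine le_trans (abs_max_sub_max_le_abs _ _ _) ?_
        have : (vmax - a * (p - tdec)) - (vmax - a * (q - tdec)) = a * (q - p) := by ring
        rw [this, abs_of_nonneg (mul_nonneg ha.le (by linarith))]
      have hh1 : max (a * (p - tacc)) 0 ≤ max (a * (q - tacc)) 0 := by
        apply max_le_max _ le_rfl
        nlinarith [mul_le_mul_of_nonneg_left (by linarith : p - tacc ≤ q - tacc) ha.le]
      have hh2 : |max (a * (p - tacc)) 0 - max (a * (q - tacc)) 0| ≤ a * (q - p) := by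
        refine le_trans (abs_max_sub_max_le_abs _ _ _) ?_
        have : (a * (p - tacc)) - (a * (q - tacc)) = -(a * (q - p)) := by ring
        rw [this, abs_neg, abs_of_nonneg (mul_nonneg ha.le (by linarith))]
      rw [abs_le] at hg2 hh2 ⊢
      exact ⟨by linarith [hg2.1, hg2.2, hh2.1, hh2.2],
        by linarith [hg2.1, hg2.2, hh2.1, hh2.2]⟩
    have inner : ∀ p q : ℝ,
        |(max (vmax - a * (p - tdec)) 0 + max (a * (p - tacc)) 0)
          - (max (vmax - a * (q - tdec)) 0 + max (a * (q - tacc)) 0)| ≤ a * |p - q| := by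
      intro p q
      rcases le_total p q with h | h
      · rw [abs_of_nonpos (by linarith : p - q ≤ (0:ℝ)), neg_sub]
        exact main p q h
      · rw [abs_of_nonneg (by linarith : (0:ℝ) ≤ p - q), abs_sub_comm]
        exact main q p h
    have h1 := abs_min_sub_min_le_max vmax
      (max (vmax - a * (p - tdec)) 0 + max (a * (p - tacc)) 0) vmax
      (max (vmax - a * (q - tdec)) 0 + max (a * (q - tacc)) 0)
    rw [sub_self, abs_zero] at h1
    have h2 := h1.trans (max_le (abs_nonneg _) le_rfl)
    exact le_trans (by simp only [hwdef]; exact h2) (inner p q)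
  have hwcont : Continuous w := hwlip.continuous
  have hvx : deriv (xStarStop x₀ vmax a t₀ tf1 tf) = v := by rw [hxG, hderiv]
  constructor
  · refine ⟨?_, ?_, ?_, ?_, ?_, ?_, ?_⟩
    · rw [hxG]
      refine (contDiff_one_iff_deriv.2 ⟨hdiffG, ?_⟩).contDiffOn
      rw [hderiv]
      rw [funext hvw]
      exact hwcont
    · rw [hvx, funext hvw]
      exact hwlip.lipschitzOnWith
    · intro s hs
      rw [hvx, hvw s, hwdef]
      constructor
      · exact le_min hv.le (by positivity)
      · exact min_le_left _ _
    · simp only [hxG, hG]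
      rw [max_eq_right (by linarith : t₀ - tdec ≤ (0:ℝ)),
        max_eq_right (by linarith : t₀ - tstop ≤ (0:ℝ)),
        max_eq_right (by linarith : t₀ - tacc ≤ (0:ℝ)),
        max_eq_right (by linarith : t₀ - tf1 ≤ (0:ℝ))]
      ring
    · simp only [hvx, hvdef]
      rw [max_eq_right (by linarith : t₀ - tdec ≤ (0:ℝ)),
        max_eq_right (by linarith : t₀ - tstop ≤ (0:ℝ)),
        max_eq_right (by linarith : t₀ - tacc ≤ (0:ℝ)),
        max_eq_right (by linarith : t₀ - tf1 ≤ (0:ℝ))]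
      ring
    · simp only [hxG, hG]
      rw [max_eq_left (by linarith : (0:ℝ) ≤ tf - tdec),
        max_eq_left (by linarith : (0:ℝ) ≤ tf - tstop),
        max_eq_left (by linarith : (0:ℝ) ≤ tf - tacc),
        max_eq_left (by linarith : (0:ℝ) ≤ tf - tf1)]
      rw [hdec, hstop, hacc, hSdef]
      field_simp
      ring
    · simp only [hvx, hvdef]
      rw [max_eq_left (by linarith : (0:ℝ) ≤ tf - tdec),
        max_eq_left (by linarith : (0:ℝ) ≤ tf - tstop),
        max_eq_left (by linarith : (0:ℝ) ≤ tf - tacc),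
        max_eq_left (by linarith : (0:ℝ) ≤ tf - tf1)]
      linear_combination a * hdec - a * hacc
  · simp only [hxG, hG]
    rw [max_eq_left (by linarith : (0:ℝ) ≤ tf1 - tdec),
      max_eq_left (by linarith : (0:ℝ) ≤ tf1 - tstop),
      max_eq_left (by linarith : (0:ℝ) ≤ tf1 - tacc),
      max_eq_right (by linarith : tf1 - tf1 ≤ (0:ℝ))]
    rw [hdec, hstop, hacc, hSdef]
    field_simp
    ring
end

section
/- Let v_max > 0, D > 0, t₀ < T, and set t_f := T + D/v_max. Let x_j : ℝ → ℝ be any function, and define x* on [t₀, t_f] by x*(s) = x_j(s) − D for s ∈ [t₀, T] and x*(s) = x_j(T) − D + v_max(s − T) for s ∈ [T, t_f]. Then every function y : ℝ → ℝ that is differentiable on [t₀, t_f] with ẏ(s) ≤ v_max for all s ∈ [t₀, t_f] and that satisfies the safety constraint x_j(s) − y(s) ≥ D for all s ∈ [t₀, T], also satisfies y(s) ≤ x*(s) for all s ∈ [t₀, t_f]. -/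
/-- 'Car follows truck exactly' case of Optimality part 2: the trajectory shifted from
the truck's trajectory `x_j` by the minimum safety distance `D` until the truck's
crossing time `T`, and proceeding at maximum speed `v_max` afterwards, pointwise
dominates every differentiable trajectory `y` of speed at most `v_max` that satisfies
the safety constraint `x_j(s) − y(s) ≥ D` on `[t₀, T]`. -/
theorem follow_truck_exactly_optimal
    (vmax D t₀ T : ℝ) (hv : 0 < vmax) (hD : 0 < D) (ht : t₀ < T)
    (xj : ℝ → ℝ) :
    ∀ y : ℝ → ℝ,
      DifferentiableOn ℝ y (Set.Icc t₀ (T + D / vmax)) →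
      (∀ s ∈ Set.Icc t₀ (T + D / vmax), deriv y s ≤ vmax) →
      (∀ s ∈ Set.Icc t₀ T, xj s - y s ≥ D) →
      ∀ s ∈ Set.Icc t₀ (T + D / vmax),
        y s ≤ (if s ≤ T then xj s - D else xj T - D + vmax * (s - T)) := by
  intro y hdiff hder hsafe s hs
  have hDv : 0 < D / vmax := div_pos hD hv
  have hTtf : T ≤ T + D / vmax := by linarith
  by_cases hsT : s ≤ T
  · simp only [if_pos hsT]
    have := hsafe s ⟨hs.1, hsT⟩
    linarith
  · simp only [if_neg hsT]
    push_neg at hsT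
    -- g(t) = vmax * t - y t is monotone on [T, t_f]
    have hsub : Set.Icc T (T + D / vmax) ⊆ Set.Icc t₀ (T + D / vmax) :=
      Set.Icc_subset_Icc ht.le le_rfl
    have hmono : MonotoneOn (fun t => vmax * t - y t) (Set.Icc T (T + D / vmax)) := by
      apply monotoneOn_of_deriv_nonneg (convex_Icc _ _)
      · exact (continuousOn_const.mul continuousOn_id).sub
          (hdiff.continuousOn.mono hsub)
      · intro x hx
        rw [interior_Icc] at hx
        have hxmem : x ∈ Set.Icc t₀ (T + D / vmax) := ⟨ht.le.trans hx.1.le, hx.2.le⟩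
        have hx' : DifferentiableAt ℝ y x := by
          have : Set.Icc t₀ (T + D / vmax) ∈ nhds x :=
            Icc_mem_nhds (lt_of_lt_of_le ht hx.1.le) hx.2
          exact (hdiff x hxmem).differentiableAt this
        exact ((differentiableAt_fun_id.const_mul vmax).sub hx').differentiableWithinAt
      · intro x hx
        rw [interior_Icc] at hx
        have hxmem : x ∈ Set.Icc t₀ (T + D / vmax) := ⟨ht.le.trans hx.1.le, hx.2.le⟩
        have hx' : DifferentiableAt ℝ y x := by
          have : Set.Icc t₀ (T + D / vmax) ∈ nhds x :=
            Icc_mem_nhds (lt_of_lt_of_le ht hx.1.le) hx.2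
          exact (hdiff x hxmem).differentiableAt this
        have : deriv (fun t => vmax * t - y t) x = vmax - deriv y x := by
          rw [deriv_fun_sub (differentiableAt_fun_id.const_mul vmax) hx',
            show deriv (fun t => vmax * t) x = vmax by
              simpa using ((hasDerivAt_id x).const_mul vmax).deriv]
        rw [this]
        have := hder x hxmem
        linarith
    have hkey := hmono ⟨le_rfl, hTtf⟩ ⟨hsT.le, hs.2⟩ hsT.le
    simp only at hkey
    have hyT := hsafe T ⟨ht.le, le_rfl⟩
    nlinarith
end
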